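/- Let d, N₊, N₋ be positive integers, L ≥ 0, and for each i ∈ {1,…,N₊}, j ∈ {1,…,N₋} let s_{ij} : ℝ^d → ℝ be differentiable with L-Lipschitz gradient. Set ρ = N₊N₋L, let 0 ≤ l ≤ N₋ be an integer, and let μ > 0 satisfy μ⁻¹ > ρ. Then for every w ∈ ℝ^d the function (v, λ) ↦ g^l(v, λ) + ‖v − w‖²/(2μ) is jointly convex on ℝ^d × ℝ^{N₊}. -/

import Mathlib

open Set InnerProductSpace

section helpers
variable {E : Type*} [NormedAddCommGroup E] [InnerProductSpace ℝ E] [CompleteSpace E]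

lemma my_hasGradientAt_normSq (x : E) :
    HasGradientAt (fun v : E => ‖v‖ ^ 2) ((2 : ℝ) • x) x := by
  rw [hasGradientAt_iff_hasFDerivAt]
  have h := (hasFDerivAt_id x).inner ℝ (hasFDerivAt_id x)
  simp only [id_eq] at h
  have hfun : (fun t : E => (inner ℝ t t : ℝ)) = fun v : E => ‖v‖ ^ 2 := by
    funext t; exact real_inner_self_eq_norm_sq t
  rw [hfun] at h
  refine h.congr_fderiv ?_
  ext y
  simp [InnerProductSpace.toDual_apply_apply, real_inner_smul_left, real_inner_comm]
  ring

lemma convexOn_univ_of_monotone_gradient {f : E → ℝ} {g : E → E}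
    (hf : ∀ x, HasGradientAt f (g x) x)
    (hmono : ∀ x y : E, 0 ≤ (inner ℝ (g x - g y) (x - y) : ℝ)) :
    ConvexOn ℝ univ f := by
  refine ⟨convex_univ, fun x _ y _ a b ha hb hab => ?_⟩
  have key : ∀ t : ℝ, HasDerivAt (fun t : ℝ => f (x + t • (y - x)))
      (inner ℝ (g (x + t • (y - x))) (y - x) : ℝ) t := by
    intro t
    have h1 : HasDerivAt (fun t : ℝ => x + t • (y - x)) (y - x) t := by
      simpa using ((hasDerivAt_id t).smul_const (y - x)).const_add x
    have h2 := (hf (x + t • (y - x))).hasFDerivAt.comp_hasDerivAt t h1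
    simpa [InnerProductSpace.toDual_apply_apply, Function.comp_def] using h2
  set ψ : ℝ → ℝ := fun t => f (x + t • (y - x)) with hψ
  have hdiff : Differentiable ℝ ψ := fun t => (key t).differentiableAt
  have hderiv : deriv ψ = fun t => (inner ℝ (g (x + t • (y - x))) (y - x) : ℝ) :=
    funext fun t => (key t).deriv
  have hm : Monotone (deriv ψ) := by
    rw [hderiv]
    intro t u htu
    rcases eq_or_lt_of_le htu with rfl | htu
    · exact le_rfl
    · have h0 := hmono (x + u • (y - x)) (x + t • (y - x))
      have he : (x + u • (y - x)) - (x + t • (y - x)) = (u - t) • (y - x) := by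
        module
      rw [he, real_inner_smul_right, inner_sub_left] at h0
      nlinarith [sub_pos.2 htu]
  have hcvx := hm.convexOn_univ_of_deriv hdiff
  have h1 := hcvx.2 (mem_univ (0 : ℝ)) (mem_univ (1 : ℝ)) ha hb hab
  have e0 : ψ 0 = f x := by simp [hψ]
  have e1 : ψ 1 = f y := by simp [hψ]
  have e2 : ψ (a • (0:ℝ) + b • 1) = f (a • x + b • y) := by
    simp only [hψ, smul_eq_mul, mul_zero, mul_one, zero_add]
    congr 1
    rw [smul_sub]
    have : a = 1 - b := by linarith
    rw [this]
    module
  rw [e0, e1, e2] at h1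
  simpa using h1

lemma convexOn_add_smul_normSq {f : E → ℝ} {g : E → E} {L : ℝ} (w : E)
    (hf : ∀ x, HasGradientAt f (g x) x)
    (hlip : ∀ x y, ‖g x - g y‖ ≤ L * ‖x - y‖) :
    ConvexOn ℝ univ (fun v => f v + L / 2 * ‖v - w‖ ^ 2) := by
  have hq : ∀ x : E, HasGradientAt (fun v : E => L / 2 * ‖v - w‖ ^ 2) (L • (x - w)) x := by
    intro x
    rw [hasGradientAt_iff_hasFDerivAt]
    have h1 : HasFDerivAt (fun v : E => ‖v - w‖ ^ 2)
        ((toDual ℝ E ((2 : ℝ) • (x - w))).comp (ContinuousLinearMap.id ℝ E)) x := by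
      have h0 := (my_hasGradientAt_normSq (x - w)).hasFDerivAt
      have h2 := h0.comp x ((hasFDerivAt_id x).sub_const w)
      simpa [Function.comp_def] using h2
    have h3 := h1.const_mul (L / 2)
    refine h3.congr_fderiv ?_
    ext y
    simp [InnerProductSpace.toDual_apply_apply, real_inner_smul_left]
    ring
  have hsum : ∀ x : E, HasGradientAt (fun v => f v + L / 2 * ‖v - w‖ ^ 2)
      (g x + L • (x - w)) x := by
    intro x
    rw [hasGradientAt_iff_hasFDerivAt, map_add]
    exact (hf x).hasFDerivAt.add (hq x).hasFDerivAt
  apply convexOn_univ_of_monotone_gradient hsum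
  intro x y
  have he : (g x + L • (x - w)) - (g y + L • (y - w)) = (g x - g y) + L • (x - y) := by
    module
  rw [he, inner_add_left, real_inner_smul_left, real_inner_self_eq_norm_sq]
  have h1 := abs_real_inner_le_norm (g x - g y) (x - y)
  have h2 := hlip x y
  have h3 := neg_abs_le (inner ℝ (g x - g y) (x - y) : ℝ)
  nlinarith [norm_nonneg (x - y), norm_nonneg (g x - g y)]

end helpers

lemma my_convexOn_sum {V : Type*} [AddCommGroup V] [Module ℝ V] {s : Set V} (hs : Convex ℝ s)
    {ι : Type*} (t : Finset ι) (F : ι → V → ℝ) (h : ∀ i ∈ t, ConvexOn ℝ s (F i)) :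
    ConvexOn ℝ s (fun v => ∑ i ∈ t, F i v) := by
  classical
  induction t using Finset.induction_on with
  | empty => simpa using convexOn_const (0 : ℝ) hs
  | @insert a t hx ih =>
      simp only [Finset.sum_insert hx]
      exact (h _ (Finset.mem_insert_self _ _)).add
        (ih fun i hi => h i (Finset.mem_insert_of_mem hi))

theorem stmt10 (d Np Nm : ℕ) (hd : 0 < d) (hNp : 0 < Np) (hNm : 0 < Nm)
    (L : ℝ) (hL : 0 ≤ L)
    (s : Fin Np → Fin Nm → EuclideanSpace ℝ (Fin d) → ℝ)
    (grad : Fin Np → Fin Nm → EuclideanSpace ℝ (Fin d) → EuclideanSpace ℝ (Fin d))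
    (hdiff : ∀ i j w, HasGradientAt (s i j) (grad i j w) w)
    (hlip : ∀ (i : Fin Np) (j : Fin Nm) (w v : EuclideanSpace ℝ (Fin d)),
      ‖grad i j w - grad i j v‖ ≤ L * ‖w - v‖)
    (l : ℕ) (hl : l ≤ Nm)
    (μ : ℝ) (hμ : 0 < μ) (hμρ : (Np : ℝ) * Nm * L < μ⁻¹)
    (w : EuclideanSpace ℝ (Fin d)) :
    ConvexOn ℝ Set.univ
      (fun p : EuclideanSpace ℝ (Fin d) × (Fin Np → ℝ) =>
        ((l : ℝ) * ∑ i, p.2 i + ∑ i, ∑ j, max (s i j p.1 - p.2 i) 0)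
          + ‖p.1 - w‖ ^ 2 / (2 * μ)) := by
  classical
  have hzero : ∀ x : EuclideanSpace ℝ (Fin d),
      HasGradientAt (fun _ : EuclideanSpace ℝ (Fin d) => (0 : ℝ)) 0 x :=
    fun x => hasGradientAt_const x 0
  have hqE : ConvexOn ℝ Set.univ (fun v : EuclideanSpace ℝ (Fin d) => ‖v - w‖ ^ 2) := by
    have h := convexOn_add_smul_normSq (g := fun _ => 0) (L := 2) w hzero
      (fun x y => by simpa using by positivity)
    have hfun : (fun v : EuclideanSpace ℝ (Fin d) => (0 : ℝ) + 2 / 2 * ‖v - w‖ ^ 2)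
        = fun v => ‖v - w‖ ^ 2 := by funext v; ring
    rwa [hfun] at h
  -- convexity of p ↦ ‖p.1 - w‖² on the product
  have hq1 : ConvexOn ℝ Set.univ
      (fun p : EuclideanSpace ℝ (Fin d) × (Fin Np → ℝ) => ‖p.1 - w‖ ^ 2) := by
    have h1 := hqE.comp_affineMap
      (LinearMap.fst ℝ (EuclideanSpace ℝ (Fin d)) (Fin Np → ℝ)).toAffineMap
    simpa [Function.comp_def] using h1
  have hij : ∀ (i : Fin Np) (j : Fin Nm), ConvexOn ℝ Set.univ
      (fun p : EuclideanSpace ℝ (Fin d) × (Fin Np → ℝ) =>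
        max (s i j p.1 - p.2 i) 0 + L / 2 * ‖p.1 - w‖ ^ 2) := by
    intro i j
    have hφ : ConvexOn ℝ Set.univ
        (fun v : EuclideanSpace ℝ (Fin d) => s i j v + L / 2 * ‖v - w‖ ^ 2) :=
      convexOn_add_smul_normSq w (fun x => hdiff i j x) (fun x y => hlip i j x y)
    have hA : ConvexOn ℝ Set.univ
        (fun p : EuclideanSpace ℝ (Fin d) × (Fin Np → ℝ) =>
          (s i j p.1 + L / 2 * ‖p.1 - w‖ ^ 2) - p.2 i) := by
      have h1 : ConvexOn ℝ Set.univ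
          (fun p : EuclideanSpace ℝ (Fin d) × (Fin Np → ℝ) =>
            s i j p.1 + L / 2 * ‖p.1 - w‖ ^ 2) := by
        simpa [Function.comp_def] using hφ.comp_affineMap
          (LinearMap.fst ℝ (EuclideanSpace ℝ (Fin d)) (Fin Np → ℝ)).toAffineMap
      have h2 : ConvexOn ℝ Set.univ
          (fun p : EuclideanSpace ℝ (Fin d) × (Fin Np → ℝ) => -p.2 i) := by
        have := LinearMap.convexOn
          (-((LinearMap.proj i) ∘ₗ LinearMap.snd ℝ (EuclideanSpace ℝ (Fin d)) (Fin Np → ℝ)))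
          (convex_univ (𝕜 := ℝ))
        exact this
      have h3 := h1.add h2
      simpa [sub_eq_add_neg, Pi.add_def] using h3
    have hB : ConvexOn ℝ Set.univ
        (fun p : EuclideanSpace ℝ (Fin d) × (Fin Np → ℝ) => L / 2 * ‖p.1 - w‖ ^ 2) := by
      have := hq1.smul (by positivity : (0:ℝ) ≤ L / 2)
      simpa [smul_eq_mul] using this
    have hmax := hA.sup hB
    have hfun : (fun p : EuclideanSpace ℝ (Fin d) × (Fin Np → ℝ) =>
          max (s i j p.1 - p.2 i) 0 + L / 2 * ‖p.1 - w‖ ^ 2)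
        = (fun p : EuclideanSpace ℝ (Fin d) × (Fin Np → ℝ) =>
            (s i j p.1 + L / 2 * ‖p.1 - w‖ ^ 2) - p.2 i)
          ⊔ (fun p => L / 2 * ‖p.1 - w‖ ^ 2) := by
      funext p
      show max (s i j p.1 - p.2 i) 0 + L / 2 * ‖p.1 - w‖ ^ 2
        = max (s i j p.1 + L / 2 * ‖p.1 - w‖ ^ 2 - p.2 i) (L / 2 * ‖p.1 - w‖ ^ 2)
      rcases le_total (s i j p.1 - p.2 i) 0 with h | h
      · rw [max_eq_right h, max_eq_right (by linarith)]
        ring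
      · rw [max_eq_left h, max_eq_left (by linarith)]
        ring
    rw [hfun]
    exact hmax
  have hS : ConvexOn ℝ Set.univ
      (fun p : EuclideanSpace ℝ (Fin d) × (Fin Np → ℝ) =>
        ∑ i : Fin Np, ∑ j : Fin Nm, (max (s i j p.1 - p.2 i) 0 + L / 2 * ‖p.1 - w‖ ^ 2)) := by
    apply my_convexOn_sum convex_univ
    intro i _
    apply my_convexOn_sum convex_univ
    intro j _
    exact hij i j
  have hlin : ConvexOn ℝ Set.univ
      (fun p : EuclideanSpace ℝ (Fin d) × (Fin Np → ℝ) => (l : ℝ) * ∑ i, p.2 i) := by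
    have hm : ConvexOn ℝ Set.univ
        (fun p : EuclideanSpace ℝ (Fin d) × (Fin Np → ℝ) => ∑ i, p.2 i) := by
      let lm : (EuclideanSpace ℝ (Fin d) × (Fin Np → ℝ)) →ₗ[ℝ] ℝ :=
        { toFun := fun p => ∑ i, p.2 i
          map_add' := by intro a b; simp [Finset.sum_add_distrib]
          map_smul' := by intro c a; simp [Finset.mul_sum] }
      exact lm.convexOn convex_univ
    have := hm.smul (by positivity : (0:ℝ) ≤ (l : ℝ))
    simpa [smul_eq_mul] using this
  set c0 : ℝ := 1 / (2 * μ) - (Np : ℝ) * Nm * L / 2 with hc0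
  have hc0nn : 0 ≤ c0 := by
    rw [hc0]
    have h2 : 1 / (2 * μ) = μ⁻¹ / 2 := by rw [one_div, mul_inv]; ring
    rw [h2]; linarith
  have hq' : ConvexOn ℝ Set.univ
      (fun p : EuclideanSpace ℝ (Fin d) × (Fin Np → ℝ) => c0 * ‖p.1 - w‖ ^ 2) := by
    have := hq1.smul hc0nn
    simpa [smul_eq_mul] using this
  have heq : (fun p : EuclideanSpace ℝ (Fin d) × (Fin Np → ℝ) =>
        ((l : ℝ) * ∑ i, p.2 i + ∑ i, ∑ j, max (s i j p.1 - p.2 i) 0)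
          + ‖p.1 - w‖ ^ 2 / (2 * μ))
      = fun p : EuclideanSpace ℝ (Fin d) × (Fin Np → ℝ) =>
          (∑ i : Fin Np, ∑ j : Fin Nm, (max (s i j p.1 - p.2 i) 0 + L / 2 * ‖p.1 - w‖ ^ 2))
            + (l : ℝ) * ∑ i, p.2 i + c0 * ‖p.1 - w‖ ^ 2 := by
    funext p
    have hsum2 : ∑ i : Fin Np, ∑ j : Fin Nm,
          (max (s i j p.1 - p.2 i) 0 + L / 2 * ‖p.1 - w‖ ^ 2)
        = (∑ i : Fin Np, ∑ j : Fin Nm, max (s i j p.1 - p.2 i) 0)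
          + (Np : ℝ) * Nm * (L / 2 * ‖p.1 - w‖ ^ 2) := by
      simp [Finset.sum_add_distrib, Finset.sum_const, Finset.card_univ, nsmul_eq_mul]
      ring
    rw [hsum2, hc0]
    have hμ0 : (2 * μ) ≠ 0 := by positivity
    field_simp
    ring
  rw [heq]
  exact (hS.add hlin).add hq'
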